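/- arXiv:2602.06939 — 4 statements merged into one kernel-verified Lean document; each statement's English description precedes it below -/
import Mathlib

section
/- Assume the range of d is closed in H₁, fix f ∈ H₁, and let u* ∈ (ker d)ᗮ be such that f − d u* is orthogonal to the range of d (i.e. u* is the canonical minimizer of J(u) := ‖f − d u‖²). Assume there exists α > 0 such that ⟪d*(d w), w⟫ ≥ α·‖w‖² for all w ∈ (ker d)ᗮ. Then for every u ∈ (ker d)ᗮ, α·‖u − u*‖² ≤ ‖f − d u‖² − ‖f − d u*‖². Consequently, if (u_N) is any sequence in (ker d)ᗮ with ‖f − d u_N‖² → inf_{u ∈ H₀} ‖f − d u‖², then u_N → u* in norm. -/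
open RealInnerProductSpace Filter

/-- Strong convexity on `(ker d)ᗮ` and convergence of near-minimizers.
If the range of `d` is closed, `u* ∈ (ker d)ᗮ` with `f - d u* ⊥ range d`, and
`⟪d*(d w), w⟫ ≥ α ‖w‖²` for all `w ∈ (ker d)ᗮ` with `α > 0`, then
`α ‖u - u*‖² ≤ ‖f - d u‖² - ‖f - d u*‖²` for every `u ∈ (ker d)ᗮ`; consequently any
sequence `(u_N)` in `(ker d)ᗮ` with `‖f - d u_N‖² → ⨅ u, ‖f - d u‖²` converges to `u*`
in norm. -/
theorem stmt10 {H₀ H₁ : Type*}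
    [NormedAddCommGroup H₀] [InnerProductSpace ℝ H₀] [CompleteSpace H₀]
    [NormedAddCommGroup H₁] [InnerProductSpace ℝ H₁] [CompleteSpace H₁]
    (d : H₀ →L[ℝ] H₁)
    (hclosed : IsClosed ((LinearMap.range (d : H₀ →ₗ[ℝ] H₁) : Submodule ℝ H₁) : Set H₁))
    (f : H₁) (ustar : H₀)
    (hmem : ustar ∈ (LinearMap.ker (d : H₀ →ₗ[ℝ] H₁))ᗮ)
    (horth : (f - d ustar) ∈ (LinearMap.range (d : H₀ →ₗ[ℝ] H₁))ᗮ)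
    (α : ℝ) (hα : 0 < α)
    (hcoer : ∀ w ∈ (LinearMap.ker (d : H₀ →ₗ[ℝ] H₁))ᗮ,
      α * ‖w‖ ^ 2 ≤ ⟪(ContinuousLinearMap.adjoint d) (d w), w⟫) :
    (∀ u ∈ (LinearMap.ker (d : H₀ →ₗ[ℝ] H₁))ᗮ,
      α * ‖u - ustar‖ ^ 2 ≤ ‖f - d u‖ ^ 2 - ‖f - d ustar‖ ^ 2) ∧
    (∀ uN : ℕ → H₀, (∀ N, uN N ∈ (LinearMap.ker (d : H₀ →ₗ[ℝ] H₁))ᗮ) →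
      Tendsto (fun N => ‖f - d (uN N)‖ ^ 2) atTop (nhds (⨅ u : H₀, ‖f - d u‖ ^ 2)) →
      Tendsto uN atTop (nhds ustar)) := by
  -- Pythagoras: ‖f - d u‖² = ‖f - d u*‖² + ‖d (u - u*)‖² for all u
  have key : ∀ u : H₀, ‖f - d u‖ ^ 2 = ‖f - d ustar‖ ^ 2 + ‖d (u - ustar)‖ ^ 2 := by
    intro u
    have h0 : ⟪f - d ustar, d (ustar - u)⟫ = 0 := by
      have := (Submodule.mem_orthogonal _ _).1 horth (d (ustar - u)) ⟨ustar - u, rfl⟩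
      rwa [real_inner_comm] at this
    have hdecomp : f - d u = (f - d ustar) + d (ustar - u) := by
      rw [map_sub]; abel
    have hnorm : ‖d (ustar - u)‖ = ‖d (u - ustar)‖ := by
      rw [map_sub, map_sub, norm_sub_rev]
    rw [hdecomp, @norm_add_sq_real, h0, hnorm]; ring
  have part1 : ∀ u ∈ (LinearMap.ker (d : H₀ →ₗ[ℝ] H₁))ᗮ,
      α * ‖u - ustar‖ ^ 2 ≤ ‖f - d u‖ ^ 2 - ‖f - d ustar‖ ^ 2 := by
    intro u hu
    have hw : u - ustar ∈ (LinearMap.ker (d : H₀ →ₗ[ℝ] H₁))ᗮ := Submodule.sub_mem _ hu hmem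
    have hc := hcoer _ hw
    have heq : ⟪(ContinuousLinearMap.adjoint d) (d (u - ustar)), u - ustar⟫
        = ‖d (u - ustar)‖ ^ 2 := by
      rw [ContinuousLinearMap.adjoint_inner_left, real_inner_self_eq_norm_sq]
    have hk := key u
    linarith [hc, heq ▸ hc]
  refine ⟨part1, ?_⟩
  -- the infimum equals ‖f - d u*‖²
  have hbdd : BddBelow (Set.range fun u : H₀ => ‖f - d u‖ ^ 2) := by
    refine ⟨0, ?_⟩
    rintro x ⟨u, rfl⟩
    positivity
  have hinf : (⨅ u : H₀, ‖f - d u‖ ^ 2) = ‖f - d ustar‖ ^ 2 := by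
    refine le_antisymm (ciInf_le hbdd ustar) (le_ciInf fun u => ?_)
    have := key u
    nlinarith [sq_nonneg ‖d (u - ustar)‖]
  intro uN hmemN htend
  rw [hinf] at htend
  have h1 : Tendsto (fun N => ‖f - d (uN N)‖ ^ 2 - ‖f - d ustar‖ ^ 2) atTop (nhds 0) := by
    have h := htend.sub (tendsto_const_nhds (x := ‖f - d ustar‖ ^ 2))
    rw [sub_self] at h
    exact h
  have h2 : Tendsto (fun N => ‖uN N - ustar‖ ^ 2) atTop (nhds 0) := by
    have hub : ∀ N, ‖uN N - ustar‖ ^ 2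
        ≤ α⁻¹ * (‖f - d (uN N)‖ ^ 2 - ‖f - d ustar‖ ^ 2) := by
      intro N
      have h := part1 (uN N) (hmemN N)
      have := mul_le_mul_of_nonneg_left h (inv_nonneg.2 hα.le)
      rwa [← mul_assoc, inv_mul_cancel₀ hα.ne', one_mul] at this
    have hupper : Tendsto (fun N => α⁻¹ * (‖f - d (uN N)‖ ^ 2 - ‖f - d ustar‖ ^ 2))
        atTop (nhds 0) := by
      simpa using h1.const_mul α⁻¹
    exact tendsto_of_tendsto_of_tendsto_of_le_of_le tendsto_const_nhds hupper
      (fun N => sq_nonneg _) hub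
  have h3 : Tendsto (fun N => ‖uN N - ustar‖) atTop (nhds 0) := by
    have := ((Real.continuous_sqrt.tendsto 0).comp h2)
    simpa [Function.comp_def, Real.sqrt_sq_eq_abs, abs_norm] using this
  exact tendsto_iff_norm_sub_tendsto_zero.2 h3
end

section
/- Let V : ℕ → ℝ be a nonnegative sequence, let c > 0, d ≥ 0, let α : ℕ → ℝ be positive with ∑_t α_t = ∞ (the series diverges) and α_t → 0, and let β : ℕ → ℝ be nonnegative with ∑_t β_t < ∞ (summable). Suppose V_{t+1} ≤ (1 − c·α_t)·V_t + α_t·d + β_t for all t ≥ 0. Then limsup_{t→∞} V_t ≤ d/c. -/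
open Filter

/-- Deterministic sequence lemma. If `V_t ≥ 0`,
`V_{t+1} ≤ (1 - c α_t) V_t + α_t d + β_t` with `c > 0`, `d ≥ 0`, step sizes `α_t > 0`
satisfying `∑ α_t = ∞` and `α_t → 0`, and nonnegative summable perturbations `β_t`,
then `limsup_{t→∞} V_t ≤ d / c`. -/
theorem stmt14 (V : ℕ → ℝ) (hV : ∀ t, 0 ≤ V t)
    (c : ℝ) (hc : 0 < c) (d : ℝ) (hd : 0 ≤ d)
    (α : ℕ → ℝ) (hα_pos : ∀ t, 0 < α t)
    (hα_div : Tendsto (fun n => ∑ t ∈ Finset.range n, α t) atTop atTop)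
    (hα_to_zero : Tendsto α atTop (nhds 0))
    (β : ℕ → ℝ) (hβ_nonneg : ∀ t, 0 ≤ β t) (hβ_sum : Summable β)
    (hrec : ∀ t, V (t + 1) ≤ (1 - c * α t) * V t + α t * d + β t) :
    limsup V atTop ≤ d / c := by
  set Sα : ℕ → ℝ := fun n => ∑ t ∈ Finset.range n, α t with hSαdef
  set Sβ : ℕ → ℝ := fun n => ∑ t ∈ Finset.range n, β t with hSβdef
  set L : ℝ := ∑' t, β t with hLdef
  have hSβ_tendsto : Tendsto Sβ atTop (nhds L) := hβ_sum.hasSum.tendsto_sum_nat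
  have hSβ_le : ∀ n, Sβ n ≤ L := fun n =>
    Summable.sum_le_tsum (Finset.range n) (fun i _ => hβ_nonneg i) hβ_sum
  have hSβ_mono : Monotone Sβ := by
    intro a b hab
    exact Finset.sum_le_sum_of_subset_of_nonneg (Finset.range_subset_range.2 hab)
      (fun i _ _ => hβ_nonneg i)
  have key : ∀ ε > 0, ∀ᶠ n in atTop, V n ≤ d / c + ε := by
    intro ε hε
    -- T₀ : beyond it, c * α t ≤ 1
    have hα1 : ∀ᶠ t in atTop, c * α t ≤ 1 := by
      have h : Tendsto (fun t => c * α t) atTop (nhds (c * 0)) := hα_to_zero.const_mul c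
      rw [mul_zero] at h
      exact h.eventually_le_const one_pos
    obtain ⟨T₀, hT₀⟩ := eventually_atTop.1 hα1
    -- T₁ : small tail of β
    have htail : ∀ᶠ n in atTop, L - Sβ n < ε / 2 := by
      have h : Tendsto (fun n => L - Sβ n) atTop (nhds (L - L)) :=
        (tendsto_const_nhds.sub hSβ_tendsto)
      rw [sub_self] at h
      exact h.eventually_lt_const (by linarith)
    obtain ⟨T₁, hT₁⟩ := eventually_atTop.1 htail
    set T : ℕ := max T₀ T₁ with hTdef
    set U : ℕ → ℝ := fun n => max (V n - d / c) 0 with hUdef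
    have hU_nonneg : ∀ n, 0 ≤ U n := fun n => le_max_right _ _
    have hVU : ∀ n, V n - d / c ≤ U n := fun n => le_max_left _ _
    have hU_rec : ∀ n, T ≤ n → U (n + 1) ≤ (1 - c * α n) * U n + β n := by
      intro n hn
      have hfac : 0 ≤ 1 - c * α n := by
        have := hT₀ n (le_trans (le_max_left _ _) hn)
        linarith
      have hR0 : 0 ≤ (1 - c * α n) * U n + β n :=
        add_nonneg (mul_nonneg hfac (hU_nonneg n)) (hβ_nonneg n)
      rcases le_or_gt (V (n + 1)) (d / c) with h | h
      · have : U (n + 1) = 0 := max_eq_right (sub_nonpos.2 h)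
        rw [this]; exact hR0
      · have hU1 : U (n + 1) = V (n + 1) - d / c := max_eq_left (by linarith)
        rw [hU1]
        have hexp : (1 - c * α n) * (V n - d / c) =
            (1 - c * α n) * V n - d / c + α n * d := by
          field_simp
          ring
        have h1 : V (n + 1) - d / c ≤ (1 - c * α n) * (V n - d / c) + β n := by
          have := hrec n
          rw [hexp]
          linarith
        have h2 : (1 - c * α n) * (V n - d / c) ≤ (1 - c * α n) * U n :=
          mul_le_mul_of_nonneg_left (hVU n) hfac
        linarith
    -- main inductive bound
    have main : ∀ n, T ≤ n →
        U n ≤ Real.exp (-(c * (Sα n - Sα T))) * U T + (Sβ n - Sβ T) := by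
      intro n hn
      induction n, hn using Nat.le_induction with
      | base => simp
      | succ n hn ih =>
        have hSa : Sα (n + 1) = Sα n + α n := Finset.sum_range_succ α n
        have hSb : Sβ (n + 1) = Sβ n + β n := Finset.sum_range_succ β n
        have he1 : (1 - c * α n) ≤ Real.exp (-(c * α n)) := by
          have := Real.add_one_le_exp (-(c * α n))
          linarith
        have hepos : (0:ℝ) < Real.exp (-(c * α n)) := Real.exp_pos _
        have hele1 : Real.exp (-(c * α n)) ≤ 1 := by
          rw [Real.exp_le_one_iff]
          have := (hα_pos n).le
          nlinarith [hc.le]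
        have htail_nonneg : 0 ≤ Sβ n - Sβ T := sub_nonneg.2 (hSβ_mono hn)
        have step1 : U (n + 1) ≤ Real.exp (-(c * α n)) * U n + β n := by
          have h := hU_rec n hn
          have : (1 - c * α n) * U n ≤ Real.exp (-(c * α n)) * U n :=
            mul_le_mul_of_nonneg_right he1 (hU_nonneg n)
          linarith
        have step2 : Real.exp (-(c * α n)) * U n ≤
            Real.exp (-(c * α n)) * (Real.exp (-(c * (Sα n - Sα T))) * U T
              + (Sβ n - Sβ T)) :=
          mul_le_mul_of_nonneg_left ih hepos.le
        have hprod : Real.exp (-(c * α n)) * Real.exp (-(c * (Sα n - Sα T)))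
            = Real.exp (-(c * (Sα (n + 1) - Sα T))) := by
          rw [← Real.exp_add, hSa]
          ring_nf
        have step3 : Real.exp (-(c * α n)) * (Sβ n - Sβ T) ≤ Sβ n - Sβ T := by
          nlinarith
        calc U (n + 1) ≤ Real.exp (-(c * α n)) * U n + β n := step1
          _ ≤ Real.exp (-(c * α n)) * (Real.exp (-(c * (Sα n - Sα T))) * U T
              + (Sβ n - Sβ T)) + β n := by linarith
          _ = Real.exp (-(c * (Sα (n + 1) - Sα T))) * U T
              + Real.exp (-(c * α n)) * (Sβ n - Sβ T) + β n := by
            rw [mul_add, ← mul_assoc, hprod]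
          _ ≤ Real.exp (-(c * (Sα (n + 1) - Sα T))) * U T + (Sβ (n + 1) - Sβ T) := by
            rw [hSb]; linarith
    -- the exponential factor tends to 0
    have hE : Tendsto (fun n => Real.exp (-(c * (Sα n - Sα T))) * U T) atTop (nhds 0) := by
      have h1 : Tendsto (fun n => c * (Sα n - Sα T)) atTop atTop := by
        have h2 : Tendsto (fun n => Sα n - Sα T) atTop atTop :=
          tendsto_atTop_add_const_right atTop (-(Sα T)) hα_div
        exact h2.const_mul_atTop hc
      have h3 : Tendsto (fun n => Real.exp (-(c * (Sα n - Sα T)))) atTop (nhds 0) :=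
        Real.tendsto_exp_atBot.comp (tendsto_neg_atTop_atBot.comp h1)
      have := h3.mul_const (U T)
      rwa [zero_mul] at this
    have hEsmall : ∀ᶠ n in atTop, Real.exp (-(c * (Sα n - Sα T))) * U T < ε / 2 :=
      hE.eventually_lt_const (by linarith)
    obtain ⟨N, hN⟩ := eventually_atTop.1 hEsmall
    rw [eventually_atTop]
    refine ⟨max N T, fun n hn => ?_⟩
    have hnT : T ≤ n := le_trans (le_max_right _ _) hn
    have hnN : N ≤ n := le_trans (le_max_left _ _) hn
    have h1 := main n hnT
    have h2 := hN n hnN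
    have h3 : Sβ n - Sβ T ≤ ε / 2 := by
      have := hT₁ T (le_max_right T₀ T₁)
      have := hSβ_le n
      linarith
    have h4 : U n ≤ ε := by linarith
    have := hVU n
    linarith
  have hcb : IsCoboundedUnder (· ≤ ·) atTop V :=
    isCoboundedUnder_le_of_le atTop hV
  refine le_of_forall_pos_le_add fun ε hε => ?_
  exact limsup_le_of_le hcb (key ε hε)
end

section
/- Let E be a real inner product space, let A : E → E be a continuous linear map, let λ > 0 and L > 0 satisfy ⟪A x, x⟫ ≥ λ·‖x‖² and ‖A x‖ ≤ L·‖x‖ for all x ∈ E, let B, ε ≥ 0, let e : ℕ → E satisfy ‖e_t‖ ≤ B·ε for all t, let α : ℕ → ℝ satisfy 0 < α_t ≤ λ/(4L²) for all t, and let x : ℕ → E satisfy the recursion x_{t+1} = x_t − α_t·(A x_t + e_t). Then, setting V_t := ‖x_t‖², for every t: V_{t+1} ≤ (1 − (λ/2)·α_t)·V_t + α_t·(B²/λ)·ε² + 2·α_t²·B²·ε². -/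
open RealInnerProductSpace

/-- One-step contraction inequality for the perturbed recursion
`x_{t+1} = x_t - α_t (A x_t + e_t)` under strong monotonicity `⟪A x, x⟫ ≥ λ ‖x‖²`,
Lipschitz bound `‖A x‖ ≤ L ‖x‖`, bias bound `‖e_t‖ ≤ B ε`, and step sizes
`0 < α_t ≤ λ / (4 L²)`: with `V_t = ‖x_t‖²`,
`V_{t+1} ≤ (1 - (λ/2) α_t) V_t + α_t (B²/λ) ε² + 2 α_t² B² ε²`. -/
theorem stmt15 {E : Type*} [NormedAddCommGroup E] [InnerProductSpace ℝ E]
    (A : E →L[ℝ] E) (lam L : ℝ) (hlam : 0 < lam) (hL : 0 < L)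
    (hmono : ∀ x : E, lam * ‖x‖ ^ 2 ≤ ⟪A x, x⟫)
    (hlip : ∀ x : E, ‖A x‖ ≤ L * ‖x‖)
    (B ε : ℝ) (hB : 0 ≤ B) (hε : 0 ≤ ε)
    (e : ℕ → E) (he : ∀ t, ‖e t‖ ≤ B * ε)
    (α : ℕ → ℝ) (hα_pos : ∀ t, 0 < α t) (hα_le : ∀ t, α t ≤ lam / (4 * L ^ 2))
    (x : ℕ → E) (hx : ∀ t, x (t + 1) = x t - α t • (A (x t) + e t)) :
    ∀ t, ‖x (t + 1)‖ ^ 2 ≤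
      (1 - (lam / 2) * α t) * ‖x t‖ ^ 2 + α t * (B ^ 2 / lam) * ε ^ 2 +
        2 * (α t) ^ 2 * B ^ 2 * ε ^ 2 := by
  intro t
  set a := α t with ha
  set u := x t with hu
  have ha_pos : 0 < a := hα_pos t
  have ha_le : a ≤ lam / (4 * L ^ 2) := hα_le t
  have hrec : x (t + 1) = u - a • (A u + e t) := hx t
  clear_value a u
  have hexp : ‖x (t + 1)‖ ^ 2
      = ‖u‖ ^ 2 - 2 * (a * ⟪u, A u + e t⟫) + a ^ 2 * ‖A u + e t‖ ^ 2 := by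
    rw [hrec, @norm_sub_sq_real, real_inner_smul_right, norm_smul]
    simp [abs_of_pos ha_pos, mul_pow]
  have hinner : ⟪u, A u + e t⟫ = ⟪A u, u⟫ + ⟪u, e t⟫ := by
    rw [inner_add_right, real_inner_comm u (A u)]
  have h1 : lam * ‖u‖ ^ 2 ≤ ⟪A u, u⟫ := hmono u
  have h2 : -(‖u‖ * ‖e t‖) ≤ ⟪u, e t⟫ := neg_le_of_abs_le (abs_real_inner_le_norm u (e t))
  have h3 : ‖A u + e t‖ ^ 2 ≤ 2 * L ^ 2 * ‖u‖ ^ 2 + 2 * ‖e t‖ ^ 2 := by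
    have h4 : ‖A u + e t‖ ≤ ‖A u‖ + ‖e t‖ := norm_add_le _ _
    have h5 : ‖A u‖ ≤ L * ‖u‖ := hlip u
    have h6 : 0 ≤ ‖A u + e t‖ := norm_nonneg _
    have h7 : 0 ≤ ‖e t‖ := norm_nonneg _
    have h8 : 0 ≤ ‖A u‖ := norm_nonneg _
    nlinarith [sq_nonneg (‖A u‖ - ‖e t‖), norm_nonneg u]
  have he' : ‖e t‖ ≤ B * ε := he t
  have hen : 0 ≤ ‖e t‖ := norm_nonneg _
  have hun : 0 ≤ ‖u‖ := norm_nonneg _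
  -- young: 2 * ‖u‖ * ‖e t‖ ≤ lam * ‖u‖^2 + ‖e t‖^2 / lam
  have hyoung : 2 * (‖u‖ * ‖e t‖) ≤ lam * ‖u‖ ^ 2 + ‖e t‖ ^ 2 / lam := by
    have key : lam * (2 * (‖u‖ * ‖e t‖)) ≤ lam * (lam * ‖u‖ ^ 2 + ‖e t‖ ^ 2 / lam) := by
      have heq : lam * (‖e t‖ ^ 2 / lam) = ‖e t‖ ^ 2 := by field_simp
      nlinarith [sq_nonneg (lam * ‖u‖ - ‖e t‖)]
    exact le_of_mul_le_mul_left key hlam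
  have hstep : a * (4 * L ^ 2) ≤ lam := by
    have h4L : (0:ℝ) < 4 * L ^ 2 := by positivity
    calc a * (4 * L ^ 2) ≤ lam / (4 * L ^ 2) * (4 * L ^ 2) := by
          exact mul_le_mul_of_nonneg_right ha_le (le_of_lt h4L)
      _ = lam := by field_simp
  have hBε : ‖e t‖ ^ 2 ≤ B ^ 2 * ε ^ 2 := by nlinarith
  have hediv : ‖e t‖ ^ 2 / lam ≤ B ^ 2 / lam * ε ^ 2 := by
    rw [div_mul_eq_mul_div, div_le_div_iff_of_pos_right hlam]; linarith
  have f1 : a ^ 2 * ‖A u + e t‖ ^ 2 ≤ 2 * a ^ 2 * L ^ 2 * ‖u‖ ^ 2 + 2 * a ^ 2 * B ^ 2 * ε ^ 2 := by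
    nlinarith [mul_le_mul_of_nonneg_left h3 (sq_nonneg a), mul_le_mul_of_nonneg_left hBε (sq_nonneg a)]
  have f2 : a * (lam * ‖u‖ ^ 2) ≤ a * ⟪A u, u⟫ := mul_le_mul_of_nonneg_left h1 ha_pos.le
  have f3 : -(a * (‖u‖ * ‖e t‖)) ≤ a * ⟪u, e t⟫ := by
    have := mul_le_mul_of_nonneg_left h2 ha_pos.le
    linarith [this]
  have f4 : a * (2 * (‖u‖ * ‖e t‖)) ≤ a * (lam * ‖u‖ ^ 2 + ‖e t‖ ^ 2 / lam) :=
    mul_le_mul_of_nonneg_left hyoung ha_pos.le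
  have f5 : a * (‖e t‖ ^ 2 / lam) ≤ a * (B ^ 2 / lam * ε ^ 2) :=
    mul_le_mul_of_nonneg_left hediv ha_pos.le
  have f6 : 2 * a ^ 2 * L ^ 2 * ‖u‖ ^ 2 ≤ lam / 2 * a * ‖u‖ ^ 2 := by
    have h := mul_le_mul_of_nonneg_right hstep (mul_nonneg ha_pos.le (sq_nonneg ‖u‖))
    linarith [h]
  rw [hexp, hinner]
  linarith [f1, f2, f3, f4, f5, f6]
end

section
/- Let E be a real inner product space, let A : E → E be a continuous linear map, let λ > 0 and L > 0 satisfy ⟪A x, x⟫ ≥ λ·‖x‖² and ‖A x‖ ≤ L·‖x‖ for all x ∈ E, let B, ε ≥ 0, let e : ℕ → E satisfy ‖e_t‖ ≤ B·ε for all t, and let α : ℕ → ℝ satisfy 0 < α_t ≤ λ/(4L²) for all t, α_t → 0, ∑_t α_t = ∞, and ∑_t α_t² < ∞. If x : ℕ → E satisfies x_{t+1} = x_t − α_t·(A x_t + e_t), then limsup_{t→∞} ‖x_t‖ ≤ √2·(B/λ)·ε. In particular, if ε = 0 then ‖x_t‖ → 0. -/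
open RealInnerProductSpace Filter

/-- Auxiliary: a nonnegative sequence satisfying `W (t+1) ≤ (1 - μ t) * W t + β t`
with `0 ≤ μ t ≤ 1`, divergent `∑ μ`, and summable nonnegative `β`, tends to `0`. -/
lemma stmt16_aux (W μ β : ℕ → ℝ) (hW0 : ∀ t, 0 ≤ W t)
    (hμ0 : ∀ t, 0 ≤ μ t) (hμ1 : ∀ t, μ t ≤ 1)
    (hβ0 : ∀ t, 0 ≤ β t) (hβ : Summable β)
    (hμdiv : Tendsto (fun n => ∑ t ∈ Finset.range n, μ t) atTop atTop)
    (hrec : ∀ t, W (t + 1) ≤ (1 - μ t) * W t + β t) :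
    Tendsto W atTop (nhds 0) := by
  rw [Metric.tendsto_atTop]
  intro δ hδ
  -- choose N with tail sum of β less than δ/3
  have hT : Tendsto (fun n => ∑ t ∈ Finset.range n, β t) atTop (nhds (∑' t, β t)) :=
    hβ.hasSum.tendsto_sum_nat
  have htail : ∀ᶠ N in atTop, (∑' t, β t) - ∑ t ∈ Finset.range N, β t < δ / 3 := by
    have := Tendsto.sub (tendsto_const_nhds (x := ∑' t, β t)) hT
    rw [sub_self] at this
    have := (this.eventually (eventually_lt_nhds (show (0:ℝ) < δ/3 by linarith)))
    exact this
  obtain ⟨N, hN⟩ := htail.exists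
  -- tail partial sums of β are ≤ δ/3
  have hIco : ∀ n, ∑ t ∈ Finset.Ico N n, β t ≤ δ / 3 := by
    intro n
    rcases le_or_gt N n with h | h
    · have h1 : ∑ t ∈ Finset.Ico N n, β t = (∑ t ∈ Finset.range n, β t) - ∑ t ∈ Finset.range N, β t := by
        rw [Finset.sum_Ico_eq_sub _ h]
      have h2 : (∑ t ∈ Finset.range n, β t) ≤ ∑' t, β t :=
        Summable.sum_le_tsum _ (fun i _ => hβ0 i) hβ
      linarith [hN]
    · rw [Finset.Ico_eq_empty (by omega)]
      simp; linarith
  -- induction bound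
  have hind : ∀ n, N ≤ n →
      W n ≤ W N * ∏ t ∈ Finset.Ico N n, (1 - μ t) + ∑ t ∈ Finset.Ico N n, β t := by
    intro n hn
    induction n with
    | zero =>
      have : N = 0 := by omega
      subst this; simp
    | succ m ih =>
      rcases Nat.lt_or_ge N (m + 1) with h | h
      · have hm : N ≤ m := by omega
        have ihm := ih hm
        have hprod0 : (0:ℝ) ≤ ∏ t ∈ Finset.Ico N m, (1 - μ t) :=
          Finset.prod_nonneg (fun i _ => by linarith [hμ1 i])
        have hsum0 : (0:ℝ) ≤ ∑ t ∈ Finset.Ico N m, β t :=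
          Finset.sum_nonneg (fun i _ => hβ0 i)
        have h1 : W (m + 1) ≤ (1 - μ m) * W m + β m := hrec m
        have hIc : Finset.Ico N (m+1) = insert m (Finset.Ico N m) := by
          rw [Nat.Ico_succ_right_eq_insert_Ico hm]
        rw [hIc, Finset.prod_insert (by simp), Finset.sum_insert (by simp)]
        have hμm0 : 0 ≤ 1 - μ m := by linarith [hμ1 m]
        have hμm1 : 1 - μ m ≤ 1 := by linarith [hμ0 m]
        calc W (m+1) ≤ (1 - μ m) * W m + β m := h1
          _ ≤ (1 - μ m) * (W N * ∏ t ∈ Finset.Ico N m, (1 - μ t) + ∑ t ∈ Finset.Ico N m, β t) + β m := by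
              exact add_le_add_left (mul_le_mul_of_nonneg_left ihm hμm0) _
          _ ≤ W N * ((1 - μ m) * ∏ t ∈ Finset.Ico N m, (1 - μ t)) + (β m + ∑ t ∈ Finset.Ico N m, β t) := by
              have : (1 - μ m) * ∑ t ∈ Finset.Ico N m, β t ≤ ∑ t ∈ Finset.Ico N m, β t := by
                nlinarith
              ring_nf
              nlinarith [hW0 N]
      · have : N = m + 1 := by omega
        subst this; simp
  -- the product tends to 0
  have hprodexp : ∀ n, ∏ t ∈ Finset.Ico N n, (1 - μ t) ≤ Real.exp (-(∑ t ∈ Finset.Ico N n, μ t)) := by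
    intro n
    calc ∏ t ∈ Finset.Ico N n, (1 - μ t) ≤ ∏ t ∈ Finset.Ico N n, Real.exp (-(μ t)) := by
          apply Finset.prod_le_prod (fun i _ => by linarith [hμ1 i])
          intro i _
          linarith [Real.add_one_le_exp (-(μ i))]
      _ = Real.exp (-(∑ t ∈ Finset.Ico N n, μ t)) := by
          rw [← Real.exp_sum]; simp
  have hsumdiv : Tendsto (fun n => ∑ t ∈ Finset.Ico N n, μ t) atTop atTop := by
    apply Tendsto.congr' _ (hμdiv.atTop_add (tendsto_const_nhds (x := -(∑ t ∈ Finset.range N, μ t))))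
    filter_upwards [eventually_ge_atTop N] with n hn
    rw [Finset.sum_Ico_eq_sub _ hn]
    ring
  have hexp0 : Tendsto (fun n => W N * Real.exp (-(∑ t ∈ Finset.Ico N n, μ t))) atTop (nhds 0) := by
    have h2 : Tendsto (fun n => Real.exp (-(∑ t ∈ Finset.Ico N n, μ t))) atTop (nhds 0) :=
      Real.tendsto_exp_atBot.comp (tendsto_neg_atBot_iff.mpr hsumdiv)
    simpa using h2.const_mul (W N)
  have hsmall : ∀ᶠ n in atTop, W N * Real.exp (-(∑ t ∈ Finset.Ico N n, μ t)) < δ / 3 := by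
    exact hexp0.eventually (eventually_lt_nhds (show (0:ℝ) < δ/3 by linarith))
  obtain ⟨M, hM⟩ := (hsmall.and (eventually_ge_atTop N)).exists_forall_of_atTop
  refine ⟨M, fun n hn => ?_⟩
  obtain ⟨hM1, hM2⟩ := hM n hn
  have hb := hind n hM2
  have hprod := hprodexp n
  have hWN := hW0 N
  have : W N * ∏ t ∈ Finset.Ico N n, (1 - μ t) ≤ W N * Real.exp (-(∑ t ∈ Finset.Ico N n, μ t)) :=
    mul_le_mul_of_nonneg_left hprod hWN
  have hIcon := hIco n
  rw [Real.dist_eq, sub_zero, abs_of_nonneg (hW0 n)]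
  linarith

set_option maxHeartbeats 1000000 in
/-- Neighborhood convergence of the perturbed recursion
`x_{t+1} = x_t - α_t (A x_t + e_t)` under strong monotonicity, Lipschitzness, bias
bound `‖e_t‖ ≤ B ε`, and Robbins–Monro step sizes with `0 < α_t ≤ λ/(4L²)`:
`limsup ‖x_t‖ ≤ √2 (B/λ) ε`; in particular `‖x_t‖ → 0` when `ε = 0`. -/
theorem stmt16 {E : Type*} [NormedAddCommGroup E] [InnerProductSpace ℝ E]
    (A : E →L[ℝ] E) (lam L : ℝ) (hlam : 0 < lam) (hL : 0 < L)
    (hmono : ∀ x : E, lam * ‖x‖ ^ 2 ≤ ⟪A x, x⟫)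
    (hlip : ∀ x : E, ‖A x‖ ≤ L * ‖x‖)
    (B ε : ℝ) (hB : 0 ≤ B) (hε : 0 ≤ ε)
    (e : ℕ → E) (he : ∀ t, ‖e t‖ ≤ B * ε)
    (α : ℕ → ℝ) (hα_pos : ∀ t, 0 < α t) (hα_le : ∀ t, α t ≤ lam / (4 * L ^ 2))
    (hα_to_zero : Tendsto α atTop (nhds 0))
    (hα_div : Tendsto (fun n => ∑ t ∈ Finset.range n, α t) atTop atTop)
    (hα_sq : Summable (fun t => (α t) ^ 2))
    (x : ℕ → E) (hx : ∀ t, x (t + 1) = x t - α t • (A (x t) + e t)) :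
    limsup (fun t => ‖x t‖) atTop ≤ Real.sqrt 2 * (B / lam) * ε ∧
    (ε = 0 → Tendsto (fun t => ‖x t‖) atTop (nhds 0)) := by
  rcases subsingleton_or_nontrivial E with hE | hE
  · have hz : (fun t => ‖x t‖) = fun _ => (0:ℝ) := by
      funext t; rw [Subsingleton.elim (x t) 0, norm_zero]
    rw [hz]
    constructor
    · rw [limsup_const]
      positivity
    · intro _; exact tendsto_const_nhds
  -- lam ≤ L
  have hlamL : lam ≤ L := by
    obtain ⟨y, hy⟩ := exists_ne (0 : E)
    have h1 := hmono y
    have h2 : ⟪A y, y⟫ ≤ ‖A y‖ * ‖y‖ := real_inner_le_norm _ _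
    have h3 : ‖A y‖ * ‖y‖ ≤ L * ‖y‖ * ‖y‖ := mul_le_mul_of_nonneg_right (hlip y) (norm_nonneg _)
    have hy0 : 0 < ‖y‖ := norm_pos_iff.mpr hy
    have hsq : ‖y‖ ^ 2 = ‖y‖ * ‖y‖ := by ring
    nlinarith [mul_pos hy0 hy0]
  set c : ℝ := 2 * B ^ 2 * ε ^ 2 / lam ^ 2 with hc_def
  have hc0 : 0 ≤ c := by positivity
  have hc_eq : lam ^ 2 * c = 2 * B ^ 2 * ε ^ 2 := by
    rw [hc_def]; field_simp
  set V : ℕ → ℝ := fun t => ‖x t‖ ^ 2 with hV_def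
  set μ : ℕ → ℝ := fun t => lam * α t with hμ_def
  set β : ℕ → ℝ := fun t => 2 * B ^ 2 * ε ^ 2 * α t ^ 2 with hβ_def
  have hμ0 : ∀ t, 0 ≤ μ t := fun t => le_of_lt (mul_pos hlam (hα_pos t))
  have hμ1 : ∀ t, μ t ≤ 1 := by
    intro t
    show lam * α t ≤ 1
    have h1 : α t * (4 * L ^ 2) ≤ lam := by
      have := hα_le t
      rw [le_div_iff₀ (by positivity)] at this
      exact this
    have : lam * α t ≤ lam * (lam / (4 * L ^ 2)) := mul_le_mul_of_nonneg_left (hα_le t) hlam.le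
    have h2 : lam * (lam / (4 * L ^ 2)) ≤ 1 := by
      rw [mul_div_assoc', div_le_one (by positivity)]
      nlinarith
    linarith
  -- the key one-step inequality
  have hkey : ∀ t, V (t + 1) ≤ (1 - μ t) * V t + μ t * c + β t := by
    intro t
    set n : ℝ := ‖x t‖ with hn_def
    set a : ℝ := α t with ha_def
    have ha0 : 0 < a := hα_pos t
    have haL : a * (4 * L ^ 2) ≤ lam := by
      have := hα_le t
      rw [le_div_iff₀ (by positivity)] at this
      exact this
    have hn0 : 0 ≤ n := norm_nonneg _
    -- expand the square
    have hexp : V (t + 1) = n ^ 2 - 2 * (a * ⟪x t, A (x t) + e t⟫) + a ^ 2 * ‖A (x t) + e t‖ ^ 2 := by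
      show ‖x (t+1)‖ ^ 2 = _
      rw [hx t, norm_sub_sq_real, real_inner_smul_right, norm_smul, mul_pow,
        Real.norm_eq_abs, sq_abs]
    -- inner product lower bound
    have hinner : lam * n ^ 2 - n * (B * ε) ≤ ⟪x t, A (x t) + e t⟫ := by
      rw [inner_add_right]
      have h1 : lam * n ^ 2 ≤ ⟪x t, A (x t)⟫ := by
        rw [real_inner_comm]; exact hmono (x t)
      have h2 : |⟪x t, e t⟫| ≤ ‖x t‖ * ‖e t‖ := abs_real_inner_le_norm _ _
      have h3 : ‖x t‖ * ‖e t‖ ≤ n * (B * ε) :=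
        mul_le_mul_of_nonneg_left (he t) hn0
      have h4 : -(n * (B * ε)) ≤ ⟪x t, e t⟫ := by
        have := neg_abs_le (⟪x t, e t⟫)
        linarith
      linarith
    -- norm squared upper bound
    have hQ : ‖A (x t) + e t‖ ^ 2 ≤ 2 * L ^ 2 * n ^ 2 + 2 * B ^ 2 * ε ^ 2 := by
      have h1 : ‖A (x t) + e t‖ ≤ L * n + B * ε := by
        calc ‖A (x t) + e t‖ ≤ ‖A (x t)‖ + ‖e t‖ := norm_add_le _ _
          _ ≤ L * n + B * ε := add_le_add (hlip (x t)) (he t)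
      have h0 : 0 ≤ ‖A (x t) + e t‖ := norm_nonneg _
      nlinarith [sq_nonneg (L * n - B * ε)]
    -- AM-GM step: 2 n B ε ≤ lam (n²/2 + c)
    have hAMGM : 2 * (n * (B * ε)) ≤ lam * (n ^ 2 / 2 + c) := by
      nlinarith [sq_nonneg (lam * n - 2 * B * ε), hc_eq, hlam]
    have hVt : V t = n ^ 2 := rfl
    have hμt : μ t = lam * a := rfl
    have hβt : β t = 2 * B ^ 2 * ε ^ 2 * a ^ 2 := rfl
    rw [hexp, hVt, hμt, hβt]
    have hIa : a * (lam * n ^ 2 - n * (B * ε)) ≤ a * ⟪x t, A (x t) + e t⟫ :=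
      mul_le_mul_of_nonneg_left hinner ha0.le
    have hQa : a ^ 2 * ‖A (x t) + e t‖ ^ 2 ≤ a ^ 2 * (2 * L ^ 2 * n ^ 2 + 2 * B ^ 2 * ε ^ 2) :=
      mul_le_mul_of_nonneg_left hQ (sq_nonneg a)
    -- 2 a² L² n² ≤ (lam a / 2) n²
    have hLa : a ^ 2 * (2 * L ^ 2 * n ^ 2) ≤ lam * a / 2 * n ^ 2 := by
      nlinarith [mul_nonneg (mul_nonneg ha0.le (sub_nonneg.mpr haL)) (sq_nonneg n)]
    have hAMa : a * (2 * (n * (B * ε))) ≤ a * (lam * (n ^ 2 / 2 + c)) :=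
      mul_le_mul_of_nonneg_left hAMGM ha0.le
    linarith
  -- apply the auxiliary lemma to W = max (V - c) 0
  set W : ℕ → ℝ := fun t => max (V t - c) 0 with hW_def
  have hW0 : ∀ t, 0 ≤ W t := fun t => le_max_right _ _
  have hWrec : ∀ t, W (t + 1) ≤ (1 - μ t) * W t + β t := by
    intro t
    have hβt0 : 0 ≤ β t := by positivity
    have hμt1 := hμ1 t
    have hμt0 := hμ0 t
    have hWt : V t - c ≤ W t := le_max_left _ _
    have hrhs0 : 0 ≤ (1 - μ t) * W t + β t := by
      have := mul_nonneg (by linarith : (0:ℝ) ≤ 1 - μ t) (hW0 t)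
      linarith
    rcases le_or_gt (V t) c with h | h
    · -- V t ≤ c: V (t+1) - c ≤ β t
      have hV1 : V (t + 1) - c ≤ β t := by
        have := hkey t
        nlinarith [hW0 t]
      have hWe : W (t + 1) = max (V (t + 1) - c) 0 := rfl
      rw [hWe, max_le_iff]
      constructor
      · have := mul_nonneg (by linarith : (0:ℝ) ≤ 1 - μ t) (hW0 t)
        linarith
      · exact hrhs0
    · have hWt' : W t = V t - c := max_eq_left (by linarith)
      have hV1 : V (t + 1) - c ≤ (1 - μ t) * (V t - c) + β t := by
        have := hkey t
        nlinarith
      have hWe : W (t + 1) = max (V (t + 1) - c) 0 := rfl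
      rw [hWe, max_le_iff]
      refine ⟨?_, hrhs0⟩
      rw [hWt']
      exact hV1
  have hβ0 : ∀ t, 0 ≤ β t := fun t => by positivity
  have hβsum : Summable β := by
    rw [hβ_def]
    exact hα_sq.mul_left (2 * B ^ 2 * ε ^ 2)
  have hμdiv : Tendsto (fun n => ∑ t ∈ Finset.range n, μ t) atTop atTop := by
    have : (fun n => ∑ t ∈ Finset.range n, μ t) = (fun n => lam * ∑ t ∈ Finset.range n, α t) := by
      funext n; rw [Finset.mul_sum]
    rw [this]
    exact hα_div.const_mul_atTop hlam
  have hWlim : Tendsto W atTop (nhds 0) :=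
    stmt16_aux W μ β hW0 hμ0 hμ1 hβ0 hβsum hμdiv hWrec
  set K : ℝ := Real.sqrt 2 * (B / lam) * ε with hK_def
  have hK0 : 0 ≤ K := by positivity
  have hKsq : K ^ 2 = c := by
    rw [hK_def, hc_def]
    rw [mul_pow, mul_pow, Real.sq_sqrt (by norm_num : (0:ℝ) ≤ 2), div_pow]
    ring
  constructor
  · -- limsup bound
    have hbound : ∀ δ : ℝ, 0 < δ → ∀ᶠ t in atTop, ‖x t‖ ≤ K + δ := by
      intro δ hδ
      have h1 : ∀ᶠ t in atTop, W t < 2 * K * δ + δ ^ 2 := by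
        apply hWlim.eventually (eventually_lt_nhds (by nlinarith [mul_nonneg hK0 hδ.le, sq_nonneg δ] : (0:ℝ) < 2 * K * δ + δ ^ 2))
      filter_upwards [h1] with t ht
      have hWt : V t - c ≤ W t := le_max_left _ _
      have hVt : V t < (K + δ) ^ 2 := by
        have : (K + δ) ^ 2 = c + (2 * K * δ + δ ^ 2) := by rw [← hKsq]; ring
        linarith
      have hVt2 : ‖x t‖ ^ 2 < (K + δ) ^ 2 := hVt
      exact (lt_of_pow_lt_pow_left₀ 2 (by positivity) hVt2).le
    have hcob : IsCoboundedUnder (· ≤ ·) atTop (fun t => ‖x t‖) :=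
      IsBoundedUnder.isCoboundedUnder_le (isBoundedUnder_of ⟨0, fun t => norm_nonneg (x t)⟩)
    apply le_of_forall_pos_le_add
    intro δ hδ
    exact limsup_le_of_le hcob (hbound δ hδ)
  · -- ε = 0 case
    intro hε0
    subst hε0
    have hc0' : c = 0 := by rw [hc_def]; ring
    have hWV : W = V := by
      funext t
      show max (V t - c) 0 = V t
      rw [hc0', sub_zero]
      exact max_eq_left (by positivity)
    have hVlim : Tendsto V atTop (nhds 0) := by rwa [hWV] at hWlim
    have := (Real.continuous_sqrt.tendsto 0).comp hVlim
    rw [Real.sqrt_zero] at this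
    convert this using 1
    funext t
    simp only [Function.comp_apply, hV_def]
    rw [Real.sqrt_sq (norm_nonneg _)]
end
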